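/- Suppose q₁,...,q_k are the points selected (in order) by the greedy farthest-point algorithm on a point set P. Then for any p ∈ P and any 1 ≤ t ≤ k, the projection p^t of p onto G_t = span{q₁,...,q_t} can be written as p^t = Σ_{i=1}^t α_i q_i with |α_i| ≤ 2^{t−1} for all i. -/

import Mathlib

abbrev Pt (d : ℕ) := EuclideanSpace ℝ (Fin d)

/-- `q` is a run of the greedy farthest-point algorithm on `P`: each `q i` belongs to
`P` and is a farthest point of `P` from the span of the previously chosen points. -/
def IsGreedy {d k : ℕ} (P : Set (Pt d)) (q : Fin k → Pt d) : Prop :=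
  ∀ i : Fin k, q i ∈ P ∧ ∀ p ∈ P,
    Metric.infDist p (Submodule.span ℝ (q '' {j | j < i}) : Set (Pt d)) ≤
      Metric.infDist (q i) (Submodule.span ℝ (q '' {j | j < i}) : Set (Pt d))

open scoped RealInnerProductSpace

lemma orthogonalProjection_minimal {d : ℕ} {K : Submodule ℝ (Pt d)} [K.HasOrthogonalProjection]
    (y : Pt d) : ‖y - (Submodule.orthogonalProjection K y : Pt d)‖ = ⨅ x : K, ‖y - x‖ :=
  Submodule.starProjection_minimal y

lemma eq_orthogonalProjection_of_mem_of_inner_eq_zero {d : ℕ} {K : Submodule ℝ (Pt d)}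
    [K.HasOrthogonalProjection] {u v : Pt d} (hvm : v ∈ K) (hvo : ∀ w ∈ K, ⟪u - v, w⟫ = 0) :
    (Submodule.orthogonalProjection K u : Pt d) = v :=
  Submodule.eq_starProjection_of_mem_of_inner_eq_zero hvm hvo

lemma sub_orthogonalProjection_mem_orthogonal {d : ℕ} {K : Submodule ℝ (Pt d)}
    [K.HasOrthogonalProjection] (v : Pt d) : v - (Submodule.orthogonalProjection K v : Pt d) ∈ Kᗮ :=
  Submodule.sub_starProjection_mem_orthogonal v

lemma infDist_eq_norm_sub_proj {d : ℕ} (K : Submodule ℝ (Pt d)) (x : Pt d) :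
    Metric.infDist x (K : Set (Pt d)) = ‖x - Submodule.orthogonalProjection K x‖ := by
  rw [Metric.infDist_eq_iInf, orthogonalProjection_minimal]
  simp_rw [dist_eq_norm]
  rfl

lemma greedy_aux {d k : ℕ} (P : Set (Pt d)) (q : Fin k → Pt d)
    (hg : IsGreedy P q) (hind : LinearIndependent ℝ q) :
    ∀ t : ℕ, t ≤ k → ∀ p ∈ P,
    ∃ α : Fin k → ℝ,
      ((Submodule.orthogonalProjection (Submodule.span ℝ (q '' {i | (i : ℕ) < t})) p : Pt d)
        = ∑ i, α i • q i) ∧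
      (∀ i : Fin k, t ≤ (i : ℕ) → α i = 0) ∧
      (∀ i, |α i| ≤ 2 ^ (t - 1)) := by
  intro t
  induction t with
  | zero =>
    intro _ p _
    refine ⟨0, ?_, fun _ _ => rfl, fun _ => by norm_num⟩
    have hK : Submodule.span ℝ (q '' {i : Fin k | (i : ℕ) < 0}) = ⊥ := by simp
    rw [eq_orthogonalProjection_of_mem_of_inner_eq_zero (Submodule.zero_mem _)
      (fun w hw => by rw [hK, Submodule.mem_bot] at hw; simp [hw])]
    simp
  | succ t ih =>
    intro htk p hp
    set K : Submodule ℝ (Pt d) := Submodule.span ℝ (q '' {i : Fin k | (i : ℕ) < t}) with hKdef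
    set j : Fin k := ⟨t, htk⟩ with hjdef
    have hjt : (j : ℕ) = t := rfl
    have hqjP : q j ∈ P := (hg j).1
    obtain ⟨α, hα, hα0, hαb⟩ := ih (le_of_lt htk) p hp
    obtain ⟨β, hβ, hβ0, hβb⟩ := ih (le_of_lt htk) (q j) hqjP
    set r : Pt d := q j - Submodule.orthogonalProjection K (q j) with hrdef
    have hrO : r ∈ Kᗮ := sub_orthogonalProjection_mem_orthogonal _
    have hpO : p - Submodule.orthogonalProjection K p ∈ Kᗮ := sub_orthogonalProjection_mem_orthogonal _
    have hjset : {i : Fin k | (i : ℕ) < t} = {i : Fin k | i < j} := by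
      ext i; simp [Fin.lt_def, hjdef]
    have hr0 : r ≠ 0 := by
      intro h
      have hmem : q j ∈ K := by
        have h2 : q j = (Submodule.orthogonalProjection K (q j) : Pt d) := by
          rwa [sub_eq_zero] at h
        rw [h2]; exact Submodule.coe_mem _
      exact hind.notMem_span_image (s := {i : Fin k | (i : ℕ) < t})
        (by simp [hjt]) hmem
    have hrpos : (0:ℝ) < ‖r‖ := norm_pos_iff.2 hr0
    have hdist : ‖p - Submodule.orthogonalProjection K p‖ ≤ ‖r‖ := by
      have h := (hg j).2 p hp
      rw [← hjset] at h
      rw [infDist_eq_norm_sub_proj, infDist_eq_norm_sub_proj] at h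
      exact h
    set c : ℝ := (⟪p - Submodule.orthogonalProjection K p, r⟫) / (‖r‖^2) with hcdef
    have hc1 : |c| ≤ 1 := by
      have habs : |c| = |⟪p - Submodule.orthogonalProjection K p, r⟫| / ‖r‖^2 := by
        rw [hcdef, abs_div, abs_of_nonneg (by positivity : (0:ℝ) ≤ ‖r‖^2)]
      rw [habs, div_le_one (by positivity)]
      calc |⟪p - Submodule.orthogonalProjection K p, r⟫|
          ≤ ‖p - Submodule.orthogonalProjection K p‖ * ‖r‖ := abs_real_inner_le_norm _ _
        _ ≤ ‖r‖ * ‖r‖ := mul_le_mul_of_nonneg_right hdist (norm_nonneg _)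
        _ = ‖r‖^2 := by ring
    have hcr : c * ‖r‖^2 = ⟪p - Submodule.orthogonalProjection K p, r⟫ := by
      rw [hcdef, div_mul_cancel₀ _ (by positivity)]
    set K' : Submodule ℝ (Pt d) := Submodule.span ℝ (q '' {i : Fin k | (i : ℕ) < t + 1})
      with hK'def
    have hKK' : K ≤ K' := Submodule.span_mono (Set.image_mono (fun i hi => by
      simp only [Set.mem_setOf_eq] at hi ⊢; omega))
    have hqjK' : q j ∈ K' := Submodule.subset_span ⟨j, by simp [hjt], rfl⟩
    have hproj : (Submodule.orthogonalProjection K' p : Pt d)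
        = (Submodule.orthogonalProjection K p : Pt d) + c • r := by
      apply eq_orthogonalProjection_of_mem_of_inner_eq_zero
      · exact Submodule.add_mem _ (hKK' (Submodule.coe_mem _))
          (Submodule.smul_mem _ _ (Submodule.sub_mem _ hqjK' (hKK' (Submodule.coe_mem _))))
      · intro w hw
        have hexp : p - ((Submodule.orthogonalProjection K p : Pt d) + c • r)
            = (p - Submodule.orthogonalProjection K p) - c • r := by abel
        have hu : ∀ i : Fin k, (i : ℕ) < t + 1 →
            ⟪p - ((Submodule.orthogonalProjection K p : Pt d) + c • r), q i⟫ = 0 := by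
          intro i hi
          rcases lt_or_ge (i : ℕ) t with hit | hit
          · have hiK : q i ∈ K := Submodule.subset_span ⟨i, hit, rfl⟩
            have h1 : ⟪p - Submodule.orthogonalProjection K p, q i⟫ = 0 := by
              rw [real_inner_comm]; exact hpO _ hiK
            have h2 : ⟪r, q i⟫ = 0 := by
              rw [real_inner_comm]; exact hrO _ hiK
            rw [hexp, inner_sub_left, inner_smul_left, h1, h2]
            simp
          · have hij : i = j := Fin.ext (by omega)
            have hqj : q j = (Submodule.orthogonalProjection K (q j) : Pt d) + r := by
              rw [hrdef]; abel
            have h1 : ⟪p - Submodule.orthogonalProjection K p,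
                (Submodule.orthogonalProjection K (q j) : Pt d)⟫ = 0 := by
              rw [real_inner_comm]; exact hpO _ (Submodule.coe_mem _)
            have h2 : ⟪r, (Submodule.orthogonalProjection K (q j) : Pt d)⟫ = 0 := by
              rw [real_inner_comm]; exact hrO _ (Submodule.coe_mem _)
            have h3 : ⟪r, r⟫ = ‖r‖^2 := real_inner_self_eq_norm_sq r
            have e1 : ⟪p - (Submodule.orthogonalProjection K p : Pt d) - c • r,
                (Submodule.orthogonalProjection K (q j) : Pt d)⟫ = 0 := by
              rw [inner_sub_left, inner_smul_left, h1, h2]; simp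
            have e2 : ⟪p - (Submodule.orthogonalProjection K p : Pt d) - c • r, r⟫ = 0 := by
              rw [inner_sub_left, inner_smul_left, h3]
              simp only [RCLike.star_def, conj_trivial]
              linarith [hcr]
            rw [hexp, hij, hqj, inner_add_right, e1, e2]
            simp
        induction hw using Submodule.span_induction with
        | mem x hx =>
          obtain ⟨i, hi, rfl⟩ := hx
          exact hu i hi
        | zero => simp
        | add x y _ _ hx hy => rw [inner_add_right, hx, hy]; ring
        | smul a x _ hx => rw [inner_smul_right, hx]; ring
    refine ⟨fun i => α i - c * β i + (if i = j then c else 0), ?_, ?_, ?_⟩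
    · have hsum : ∑ i, (α i - c * β i + (if i = j then c else 0)) • q i
          = (∑ i, α i • q i) - c • (∑ i, β i • q i) + c • q j := by
        have hterm : ∀ i : Fin k, (α i - c * β i + (if i = j then c else 0)) • q i
            = α i • q i - c • (β i • q i) + (if i = j then c • q j else 0) := by
          intro i
          rcases eq_or_ne i j with h | h <;>
            simp [h, sub_smul, add_smul, smul_smul]
        rw [Finset.sum_congr rfl (fun i _ => hterm i), Finset.sum_add_distrib,
          Finset.sum_sub_distrib, ← Finset.smul_sum,
          Finset.sum_ite_eq' Finset.univ j]
        simp
      rw [hproj, hsum, ← hα, ← hβ, hrdef, smul_sub]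
      abel
    · intro i hi
      have hij : i ≠ j := by
        intro h
        rw [h] at hi
        omega
      show α i - c * β i + (if i = j then c else 0) = 0
      rw [hα0 i (by omega), hβ0 i (by omega), if_neg hij]
      ring
    · intro i
      rcases eq_or_ne i j with hij | hij
      · show |α i - c * β i + (if i = j then c else 0)| ≤ 2 ^ (t + 1 - 1)
        have hti : t ≤ (i : ℕ) := by rw [hij, hjt]
        rw [hα0 i hti, hβ0 i hti, if_pos hij]
        simpa using hc1.trans (one_le_pow₀ (by norm_num) : (1:ℝ) ≤ 2 ^ (t + 1 - 1))
      · show |α i - c * β i + (if i = j then c else 0)| ≤ 2 ^ (t + 1 - 1)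
        rw [if_neg hij, add_zero]
        rcases lt_or_ge (i : ℕ) t with hit | hit
        · have ht1 : 1 ≤ t := by omega
          have h1 : |α i - c * β i| ≤ |α i| + |c| * |β i| := by
            calc |α i - c * β i| ≤ |α i| + |c * β i| := abs_sub _ _
              _ = |α i| + |c| * |β i| := by rw [abs_mul]
          refine h1.trans ?_
          calc |α i| + |c| * |β i| ≤ 2 ^ (t-1) + 1 * 2 ^ (t-1) := by
                gcongr
                · exact hαb i
                · exact hβb i
            _ ≤ 2 ^ (t + 1 - 1) := by
                rw [one_mul]
                have h2 : (2:ℝ) ^ (t-1) + 2 ^ (t-1) = 2 ^ (t-1+1) := by ring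
                rw [h2, show t + 1 - 1 = t from rfl]
                gcongr
                · norm_num
                · omega
        · rw [hα0 i hit, hβ0 i hit]
          simp

/-- If `q 0, …, q (k-1)` is a greedy selection from `P`, then for any `p ∈ P` and
`1 ≤ t ≤ k`, the projection of `p` onto `G_t = span{q 0, …, q (t-1)}` can be written
as `∑_{i < t} α i • q i` with all `|α i| ≤ 2^{t-1}`. -/
theorem greedy_projection_coeffs {d k : ℕ} (P : Set (Pt d)) (q : Fin k → Pt d)
    (hg : IsGreedy P q) (hind : LinearIndependent ℝ q)
    (p : Pt d) (hp : p ∈ P) (t : ℕ) (ht1 : 1 ≤ t) (ht2 : t ≤ k) :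
    ∃ α : Fin k → ℝ,
      ((Submodule.orthogonalProjection (Submodule.span ℝ (q '' {i | (i : ℕ) < t})) p : Pt d)
        = ∑ i, α i • q i) ∧
      (∀ i : Fin k, t ≤ (i : ℕ) → α i = 0) ∧
      (∀ i, |α i| ≤ 2 ^ (t - 1)) := by
  exact greedy_aux P q hg hind t ht2 p hp
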